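/- For a cyclically indexed vector θ ∈ ℝⁿ: (i) for every integer k with 1 ≤ k ≤ L(θ)/2 and every index i, (θ_i − θ_{i+k})(θ_{i+k} − θ_{i+2k}) = 0; (ii) for every integer k with 1 ≤ k ≤ L(θ), Σ_{i=1}^n (θ_i − θ_{i+k})² = k·W(θ). -/

import Mathlib

open Finset

/-- The minimal length of a maximal set of cyclically consecutive indices on which the
`n`-periodic sequence `θ` is constant (equal to `n` when `θ` is constant). -/
noncomputable def cycMinSeg (n : ℕ) (θ : ℤ → ℝ) : ℕ :=
  sInf ({n} ∪ {d : ℕ | 0 < d ∧ ∃ i : ℤ,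
    θ i ≠ θ (i + 1) ∧ θ (i + d) ≠ θ (i + d + 1) ∧
    ∀ e : ℕ, 0 < e → e < d → θ (i + e) = θ (i + e + 1)})

private lemma cyc_key (n : ℕ) (θ : ℤ → ℝ) (a : ℤ) (d : ℕ) (hd0 : 0 < d)
    (hd : d < cycMinSeg n θ)
    (ha : θ a ≠ θ (a + 1)) (hb : θ (a + d) ≠ θ (a + d + 1)) : False := by
  classical
  set S : Set ℕ := {e : ℕ | 0 < e ∧ e ≤ d ∧ θ (a + e) ≠ θ (a + e + 1)} with hS
  have hdS : d ∈ S := ⟨hd0, le_refl d, hb⟩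
  have hne : S.Nonempty := ⟨d, hdS⟩
  set m := sInf S with hm
  have hmS : m ∈ S := Nat.sInf_mem hne
  have hmd : m ≤ d := Nat.sInf_le hdS
  have hmem : m ∈ ({n} ∪ {d : ℕ | 0 < d ∧ ∃ i : ℤ,
      θ i ≠ θ (i + 1) ∧ θ (i + d) ≠ θ (i + d + 1) ∧
      ∀ e : ℕ, 0 < e → e < d → θ (i + e) = θ (i + e + 1)} : Set ℕ) := by
    refine Or.inr ⟨hmS.1, a, ha, hmS.2.2, ?_⟩
    intro e he hem
    by_contra hne'
    exact Nat.notMem_of_lt_sInf hem ⟨he, le_trans hem.le hmd, hne'⟩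
  have h2 : cycMinSeg n θ ≤ m := Nat.sInf_le hmem
  omega

private lemma cyc_tele (θ : ℤ → ℝ) (i : ℤ) : ∀ k : ℕ,
    θ i - θ (i + k) = ∑ e ∈ range k, (θ (i + e) - θ (i + e + 1))
  | 0 => by simp
  | (k+1) => by
    rw [Finset.sum_range_succ, ← cyc_tele θ i k]
    push_cast
    rw [show i + ((k : ℤ) + 1) = i + k + 1 by ring]
    ring

private lemma cyc_sq_sum {β : Type*} (s : Finset β) (x : β → ℝ)
    (h : ∀ a ∈ s, ∀ b ∈ s, a ≠ b → x a * x b = 0) :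
    (∑ a ∈ s, x a) ^ 2 = ∑ a ∈ s, (x a) ^ 2 := by
  rw [sq, Finset.sum_mul_sum]
  refine Finset.sum_congr rfl fun a ha => ?_
  rw [Finset.sum_eq_single a (fun b hb hba => h a ha b hb hba.symm)
      (fun h' => absurd ha h')]
  exact (sq (x a)).symm

private lemma cyc_shift1 (n : ℕ) (hn : 1 ≤ n) (g : ℤ → ℝ)
    (hg : ∀ j : ℤ, g (j + n) = g j) :
    ∑ i ∈ range n, g ((i : ℤ) + 1) = ∑ i ∈ range n, g (i : ℤ) := by
  obtain ⟨m, rfl⟩ : ∃ m, n = m + 1 := ⟨n - 1, by omega⟩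
  rw [Finset.sum_range_succ, Finset.sum_range_succ']
  have h2 : g ((m : ℤ) + 1) = g 0 := by
    rw [show (m : ℤ) + 1 = 0 + ((m + 1 : ℕ) : ℤ) by push_cast; ring, hg 0]
  have h3 : ∀ i : ℕ, g (((i + 1 : ℕ) : ℤ)) = g ((i : ℤ) + 1) := fun i => by norm_cast
  simp only [h3]
  rw [h2]
  norm_num

private lemma cyc_shiftc (n : ℕ) (hn : 1 ≤ n) (g : ℤ → ℝ)
    (hg : ∀ j : ℤ, g (j + n) = g j) :
    ∀ c : ℕ, ∑ i ∈ range n, g ((i : ℤ) + c) = ∑ i ∈ range n, g (i : ℤ)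
  | 0 => by simp
  | (c+1) => by
    have h := cyc_shift1 n hn (fun j => g (j + c))
      (fun j => by rw [show j + (n : ℤ) + c = (j + c) + n by ring, hg])
    calc ∑ i ∈ range n, g ((i : ℤ) + ((c + 1 : ℕ) : ℤ))
        = ∑ i ∈ range n, g (((i : ℤ) + 1) + c) :=
          Finset.sum_congr rfl fun i _ => by rw [show (i:ℤ) + ((c+1 : ℕ):ℤ) = ((i:ℤ)+1) + c by push_cast; ring]
      _ = ∑ i ∈ range n, g ((i : ℤ) + c) := h
      _ = _ := cyc_shiftc n hn g hg c

theorem seg_product_zero_and_total_variation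
    (n : ℕ) (hn : 2 ≤ n)
    (θ : ℤ → ℝ) (hθper : ∀ i : ℤ, θ (i + n) = θ i) :
    (∀ k : ℕ, 1 ≤ k → 2 * k ≤ cycMinSeg n θ → ∀ i : ℤ,
      (θ i - θ (i + k)) * (θ (i + k) - θ (i + 2 * k)) = 0) ∧
    (∀ k : ℕ, 1 ≤ k → k ≤ cycMinSeg n θ →
      ∑ i ∈ Finset.range n, (θ (i + 1) - θ (i + 1 + k)) ^ 2
        = k * ∑ i ∈ Finset.range n, (θ (i + 1) - θ (i + 2)) ^ 2) := by
  constructor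
  · intro k hk1 hk2 i
    by_cases hall : ∀ e : ℕ, e < k → θ (i + e) = θ (i + e + 1)
    · have h0 : θ i - θ (i + k) = 0 := by
        rw [cyc_tele θ i k]
        exact Finset.sum_eq_zero fun e he => by
          rw [hall e (Finset.mem_range.mp he)]; ring
      rw [h0, zero_mul]
    · push_neg at hall
      obtain ⟨e0, he0k, he0⟩ := hall
      have hzero : ∀ e : ℕ, k ≤ e → e < 2 * k → θ (i + e) = θ (i + e + 1) := by
        intro e hke he2k
        by_contra hne
        refine cyc_key n θ (i + e0) (e - e0) (by omega) (by omega) he0 ?_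
        rw [show i + (e0 : ℤ) + ((e - e0 : ℕ) : ℤ) = i + (e : ℤ) by omega]
        exact hne
      have h0 : θ (i + k) - θ (i + 2 * k) = 0 := by
        have ht := cyc_tele θ (i + k) k
        rw [show i + (k : ℤ) + k = i + 2 * (k : ℤ) by ring] at ht
        rw [ht]
        refine Finset.sum_eq_zero fun e he => ?_
        have he' := Finset.mem_range.mp he
        rw [show i + (k : ℤ) + e = i + ((k + e : ℕ) : ℤ) by push_cast; ring,
          hzero (k + e) (by omega) (by omega)]
        ring
      rw [h0, mul_zero]
  · intro k hk1 hkL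
    have hn1 : 1 ≤ n := by omega
    set g : ℤ → ℝ := fun j => (θ j - θ (j + 1)) ^ 2 with hg
    have hgper : ∀ j : ℤ, g (j + n) = g j := by
      intro j
      simp only [hg]
      rw [show j + (n : ℤ) + 1 = (j + 1) + n by ring, hθper, hθper]
    have hstep : ∀ i : ℤ, (θ i - θ (i + k)) ^ 2 = ∑ e ∈ range k, g (i + e) := by
      intro i
      rw [cyc_tele θ i k]
      refine cyc_sq_sum (range k) _ ?_
      intro a ha b hb hab
      wlog h : a < b generalizing a b
      · rw [mul_comm]; exact this b hb a ha hab.symm (by omega)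
      rcases eq_or_ne (θ (i + a) - θ (i + a + 1)) 0 with h0 | h0
      · rw [h0, zero_mul]
      rcases eq_or_ne (θ (i + b) - θ (i + b + 1)) 0 with h1 | h1
      · rw [h1, mul_zero]
      exfalso
      have hb' := Finset.mem_range.mp hb
      refine cyc_key n θ (i + a) (b - a) (by omega) (by omega)
        (sub_ne_zero.mp h0) ?_
      rw [show i + (a : ℤ) + ((b - a : ℕ) : ℤ) = i + (b : ℤ) by omega]
      exact sub_ne_zero.mp h1
    calc ∑ i ∈ range n, (θ (i + 1) - θ (i + 1 + k)) ^ 2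
        = ∑ i ∈ range n, ∑ e ∈ range k, g ((i : ℤ) + 1 + e) :=
          Finset.sum_congr rfl fun i _ => hstep ((i : ℤ) + 1)
      _ = ∑ e ∈ range k, ∑ i ∈ range n, g ((i : ℤ) + 1 + e) := Finset.sum_comm
      _ = ∑ e ∈ range k, ∑ i ∈ range n, g (i : ℤ) := by
          refine Finset.sum_congr rfl fun e _ => ?_
          calc ∑ i ∈ range n, g ((i : ℤ) + 1 + e)
              = ∑ i ∈ range n, g ((i : ℤ) + ((1 + e : ℕ) : ℤ)) :=
                Finset.sum_congr rfl fun i _ => by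
                  rw [show (i : ℤ) + 1 + e = (i : ℤ) + ((1 + e : ℕ) : ℤ) by push_cast; ring]
            _ = _ := cyc_shiftc n hn1 g hgper (1 + e)
      _ = k * ∑ i ∈ range n, g (i : ℤ) := by
          rw [Finset.sum_const, nsmul_eq_mul, Finset.card_range]
      _ = k * ∑ i ∈ range n, (θ (i + 1) - θ (i + 2)) ^ 2 := by
          congr 1
          rw [← cyc_shiftc n hn1 g hgper 1]
          refine Finset.sum_congr rfl fun i _ => ?_
          simp only [hg]
          rw [show (i : ℤ) + ((1 : ℕ) : ℤ) = (i : ℤ) + 1 by push_cast; ring,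
            show (i : ℤ) + 1 + 1 = (i : ℤ) + 2 by ring]
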